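/- Fix 0 < λ ≤ 1, K ≥ 0 and real numbers a < b < c < d. Let ξ : ℝ² → ℂ satisfy |ξ(p) − ξ(q)| ≤ K·|p − q|^λ for all p, q, and ξ(x,y) = 0 whenever (x,y) ∉ [a,b] × [c,d]. Then the function Φ(u,v) = ∬_{[a,b]×[c,d]} ξ(x,y) · c(u,v,x,y) · (x − y)^{-2} dx dy is continuous on { (u,v) ∈ ℝ² : u ≠ v }. -/

import Mathlib

open MeasureTheory

/-- The cosine of the intersection angle of the hyperbolic geodesics with ideal
endpoints `{u,v}` and `{x,y}`, set to `0` if they do not intersect. -/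
noncomputable def crossCos (u v x y : ℝ) : ℝ :=
  if (u - x) * (u - y) * (v - x) * (v - y) < 0 then
    ((u + v) * (x + y) - 2 * u * v - 2 * x * y) / ((u - v) * (x - y))
  else 0

lemma abs_crossCos_le_one (u v x y : ℝ) : |crossCos u v x y| ≤ 1 := by
  unfold crossCos
  split_ifs with h
  · have hAB : ((u - x) * (v - y)) * ((u - y) * (v - x)) < 0 := by nlinarith [h]
    have hnum : (u + v) * (x + y) - 2 * u * v - 2 * x * y
        = -(((u - x) * (v - y)) + ((u - y) * (v - x))) := by ring
    have hden : (u - v) * (x - y) = ((u - x) * (v - y)) - ((u - y) * (v - x)) := by ring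
    set A := (u - x) * (v - y) with hA
    set B := (u - y) * (v - x) with hB
    have hd : A - B ≠ 0 := by
      intro h0
      have hAB' : A = B := by linarith
      rw [hAB'] at hAB
      nlinarith [sq_nonneg B]
    rw [hnum, hden, abs_div, div_le_one (abs_pos.mpr hd)]
    have hsq : |-(A + B)| ^ 2 ≤ |A - B| ^ 2 := by
      rw [abs_neg, sq_abs, sq_abs]; nlinarith [hAB]
    exact le_of_pow_le_pow_left₀ two_ne_zero (abs_nonneg _) hsq
  · simp

lemma crossCos_continuousAt {u v x y : ℝ} (huv : u ≠ v) (hxy : x ≠ y)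
    (h : (u - x) * (u - y) * (v - x) * (v - y) ≠ 0) :
    ContinuousAt (fun g : ℝ × ℝ => crossCos g.1 g.2 x y) (u, v) := by
  have hP : Continuous fun g : ℝ × ℝ => (g.1 - x) * (g.1 - y) * (g.2 - x) * (g.2 - y) := by
    fun_prop
  rcases h.lt_or_gt with hneg | hpos
  · have hev : ∀ᶠ g : ℝ × ℝ in nhds (u, v),
        (g.1 - x) * (g.1 - y) * (g.2 - x) * (g.2 - y) < 0 :=
      (isOpen_lt hP continuous_const).mem_nhds hneg
    have hcont : ContinuousAt (fun g : ℝ × ℝ =>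
        ((g.1 + g.2) * (x + y) - 2 * g.1 * g.2 - 2 * x * y) / ((g.1 - g.2) * (x - y))) (u, v) := by
      apply ContinuousAt.div (by fun_prop) (by fun_prop)
      exact mul_ne_zero (sub_ne_zero.mpr huv) (sub_ne_zero.mpr hxy)
    exact hcont.congr (by filter_upwards [hev] with g hg; simp [crossCos, if_pos hg])
  · have hev : ∀ᶠ g : ℝ × ℝ in nhds (u, v),
        0 < (g.1 - x) * (g.1 - y) * (g.2 - x) * (g.2 - y) :=
      (isOpen_lt continuous_const hP).mem_nhds hpos
    have hc : ContinuousAt (fun _ : ℝ × ℝ => (0 : ℝ)) (u, v) := continuousAt_const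
    exact hc.congr (by
      filter_upwards [hev] with g hg
      simp [crossCos, not_lt_of_gt hg])

lemma holder_continuous {lam K : ℝ} (hlam0 : 0 < lam) (ξ : ℝ × ℝ → ℂ)
    (hHolder : ∀ p q : ℝ × ℝ, ‖ξ p - ξ q‖ ≤ K * dist p q ^ lam) :
    Continuous ξ := by
  rw [continuous_iff_continuousAt]
  intro p
  rw [ContinuousAt, tendsto_iff_norm_sub_tendsto_zero]
  have hb : Filter.Tendsto (fun q : ℝ × ℝ => K * dist q p ^ lam) (nhds p) (nhds 0) := by
    have h1 : ContinuousAt (fun t : ℝ => t ^ lam) 0 :=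
      Real.continuousAt_rpow_const 0 lam (Or.inr hlam0.le)
    have h2 : Filter.Tendsto (fun q : ℝ × ℝ => dist q p) (nhds p) (nhds (dist p p)) :=
      (continuous_id.dist continuous_const).tendsto p
    rw [dist_self] at h2
    have := (h1.tendsto.comp h2).const_mul K
    simpa [Real.zero_rpow hlam0.ne'] using this
  exact squeeze_zero (fun q => norm_nonneg _)
    (fun q => by simpa [dist_comm] using hHolder q p) hb

lemma line_null_fst (t : ℝ) : (volume : Measure (ℝ × ℝ)) {p : ℝ × ℝ | p.1 = t} = 0 := by
  have h : {p : ℝ × ℝ | p.1 = t} = ({t} : Set ℝ) ×ˢ (Set.univ : Set ℝ) := by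
    ext p
    simp only [Set.mem_setOf_eq, Set.mem_prod, Set.mem_singleton_iff, Set.mem_univ, and_true]
  rw [h, Measure.volume_eq_prod, Measure.prod_prod]
  simp

lemma line_null_snd (t : ℝ) : (volume : Measure (ℝ × ℝ)) {p : ℝ × ℝ | p.2 = t} = 0 := by
  have h : {p : ℝ × ℝ | p.2 = t} = (Set.univ : Set ℝ) ×ˢ ({t} : Set ℝ) := by
    ext p
    simp only [Set.mem_setOf_eq, Set.mem_prod, Set.mem_singleton_iff, Set.mem_univ, true_and]
  rw [h, Measure.volume_eq_prod, Measure.prod_prod]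
  simp

/-- `g ↦ ∫ ξ(h) cos(g,h) dL(h)` is a continuous function of the geodesic
`g = (u,v)`. -/
theorem crossCos_integral_continuous
    (lam K : ℝ) (hlam0 : 0 < lam) (hlam1 : lam ≤ 1) (hK : 0 ≤ K)
    (a b c d : ℝ) (hab : a < b) (hbc : b < c) (hcd : c < d)
    (ξ : ℝ × ℝ → ℂ)
    (hHolder : ∀ p q : ℝ × ℝ, ‖ξ p - ξ q‖ ≤ K * dist p q ^ lam)
    (hsupp : ∀ x y : ℝ, (x, y) ∉ Set.Icc a b ×ˢ Set.Icc c d → ξ (x, y) = 0) :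
    ContinuousOn
      (fun g : ℝ × ℝ => ∫ p in Set.Icc a b ×ˢ Set.Icc c d,
        ξ p * ((crossCos g.1 g.2 p.1 p.2 : ℝ) : ℂ) * ((((p.1 - p.2) ^ 2)⁻¹ : ℝ) : ℂ))
      {g : ℝ × ℝ | g.1 ≠ g.2} := by
  set s : Set (ℝ × ℝ) := Set.Icc a b ×ˢ Set.Icc c d with hs
  have hsmeas : MeasurableSet s := (measurableSet_Icc.prod measurableSet_Icc)
  have hξc : Continuous ξ := holder_continuous hlam0 ξ hHolder
  -- bound on ξ
  set M : ℝ := max (b - a + 1) (d - c) with hM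
  have hMpos : 0 < M := lt_max_of_lt_left (by linarith)
  have hξbd : ∀ p ∈ s, ‖ξ p‖ ≤ K * M ^ lam := by
    intro p hp
    have hq : ((a - 1, c) : ℝ × ℝ) ∉ s := by
      simp only [hs, Set.mem_prod, Set.mem_Icc, not_and_or]
      left; left; intro h; linarith
    have hz : ξ (a - 1, c) = 0 := hsupp _ _ hq
    have hd : dist p ((a - 1, c) : ℝ × ℝ) ≤ M := by
      rcases hp with ⟨h1, h2⟩
      simp only [Set.mem_Icc] at h1 h2
      rw [Prod.dist_eq, show ((a - 1, c) : ℝ × ℝ).1 = a - 1 from rfl,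
        show ((a - 1, c) : ℝ × ℝ).2 = c from rfl]
      have hbaM : b - a + 1 ≤ M := le_max_left _ _
      have hdcM : d - c ≤ M := le_max_right _ _
      apply max_le
      · rw [Real.dist_eq, abs_le]
        constructor <;> linarith [h1.1, h1.2]
      · rw [Real.dist_eq, abs_le]
        constructor <;> linarith [h2.1, h2.2]
    calc ‖ξ p‖ = ‖ξ p - ξ (a - 1, c)‖ := by rw [hz, sub_zero]
      _ ≤ K * dist p ((a-1, c) : ℝ × ℝ) ^ lam := hHolder _ _
      _ ≤ K * M ^ lam := by
          gcongr
  
  have hccmeas : ∀ u v : ℝ, Measurable (fun p : ℝ × ℝ => crossCos u v p.1 p.2) := by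
    intro u v
    unfold crossCos
    refine Measurable.ite ?_ (Measurable.div (by fun_prop) (by fun_prop)) measurable_const
    exact measurableSet_lt (by fun_prop) measurable_const
  apply continuousOn_of_forall_continuousAt
  rintro ⟨u₀, v₀⟩ hg₀
  simp only [Set.mem_setOf_eq] at hg₀
  apply continuousAt_of_dominated (bound := fun _ => K * M ^ lam * ((c - b) ^ 2)⁻¹)
  · -- measurability
    apply Filter.Eventually.of_forall
    intro g
    exact (((hξc.aestronglyMeasurable).mul
      ((Complex.measurable_ofReal.comp (hccmeas g.1 g.2)).aestronglyMeasurable)).mul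
      ((Complex.measurable_ofReal.comp
        (((measurable_fst.sub measurable_snd).pow_const 2).inv)).aestronglyMeasurable)).restrict
  · -- bound
    apply Filter.Eventually.of_forall
    intro g
    filter_upwards [ae_restrict_mem hsmeas] with p hp
    have h1 := hξbd p hp
    have h2 := abs_crossCos_le_one g.1 g.2 p.1 p.2
    obtain ⟨hp1, hp2⟩ := hp
    simp only [Set.mem_Icc] at hp1 hp2
    have h3 : |(((p.1 - p.2) ^ 2)⁻¹)| ≤ ((c - b) ^ 2)⁻¹ := by
      rw [abs_of_nonneg (inv_nonneg.mpr (sq_nonneg _))]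
      apply inv_anti₀ (pow_pos (by linarith) 2)
      nlinarith [hp1.2, hp2.1, hbc]
    rw [norm_mul, norm_mul, Complex.norm_real, Complex.norm_real,
      Real.norm_eq_abs, Real.norm_eq_abs]
    calc ‖ξ p‖ * |crossCos g.1 g.2 p.1 p.2| * |(((p.1 - p.2) ^ 2)⁻¹)|
        ≤ (K * M ^ lam) * 1 * ((c - b) ^ 2)⁻¹ := by
          apply mul_le_mul _ h3 (abs_nonneg _) (by positivity)
          exact mul_le_mul h1 h2 (abs_nonneg _) (by positivity)
      _ = K * M ^ lam * ((c - b) ^ 2)⁻¹ := by ring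
  · -- integrable bound
    exact (integrableOn_const_iff).mpr (Or.inr ((isCompact_Icc.prod isCompact_Icc).measure_lt_top))
  · -- a.e. continuity
    have hNnull : (volume : Measure (ℝ × ℝ))
        ({p : ℝ × ℝ | p.1 = u₀} ∪ {p : ℝ × ℝ | p.1 = v₀} ∪
          {p : ℝ × ℝ | p.2 = u₀} ∪ {p : ℝ × ℝ | p.2 = v₀}) = 0 := by
      refine measure_union_null (measure_union_null (measure_union_null ?_ ?_) ?_) ?_
      · exact line_null_fst u₀
      · exact line_null_fst v₀
      · exact line_null_snd u₀
      · exact line_null_snd v₀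
    have hNnull' : (volume.restrict s)
        ({p : ℝ × ℝ | p.1 = u₀} ∪ {p : ℝ × ℝ | p.1 = v₀} ∪
          {p : ℝ × ℝ | p.2 = u₀} ∪ {p : ℝ × ℝ | p.2 = v₀}) = 0 :=
      le_antisymm ((Measure.restrict_apply_le _ _).trans hNnull.le) zero_le
    filter_upwards [ae_restrict_mem hsmeas, measure_eq_zero_iff_ae_notMem.mp hNnull']
      with p hp hN
    simp only [Set.mem_union, Set.mem_setOf_eq, not_or] at hN
    obtain ⟨⟨⟨hn1, hn2⟩, hn3⟩, hn4⟩ := hN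
    obtain ⟨hp1, hp2⟩ := hp
    simp only [Set.mem_Icc] at hp1 hp2
    have hxy : p.1 ≠ p.2 := by intro h; linarith [hp1.2, hp2.1, h ▸ le_refl p.1]
    have hne : (u₀ - p.1) * (u₀ - p.2) * (v₀ - p.1) * (v₀ - p.2) ≠ 0 := by
      exact mul_ne_zero (mul_ne_zero (mul_ne_zero (sub_ne_zero.mpr (Ne.symm hn1))
        (sub_ne_zero.mpr (Ne.symm hn3))) (sub_ne_zero.mpr (Ne.symm hn2)))
        (sub_ne_zero.mpr (Ne.symm hn4))
    have hcc : ContinuousAt (fun g : ℝ × ℝ => crossCos g.1 g.2 p.1 p.2) (u₀, v₀) :=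
      crossCos_continuousAt hg₀ hxy hne
    exact (continuousAt_const.mul
      (Complex.continuous_ofReal.continuousAt.comp hcc)).mul continuousAt_const
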